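/- Let γ ∈ ℝ, m ∈ ℕ, and α₀ < α₁ < ⋯ < α_{m+1} be real numbers. For j = 0,…,m let ψ_j : ℝ → ℝ be twice differentiable on an open interval containing [α_j, α_{j+1}] with ψ_j''(t) ≤ γ for all t in that interval. Suppose that for j = 0,…,m−1 one has ψ_j(α_{j+1}) = ψ_{j+1}(α_{j+1}) (continuity matching at the breakpoints) and ψ_{j+1}'(α_{j+1}) ≤ ψ_j'(α_{j+1}) (the derivative can only jump downward at the breakpoints). Then ψ_m(α_{m+1}) ≤ ψ₀(α₀) + ψ₀'(α₀)(α_{m+1} − α₀) + (γ/2)(α_{m+1} − α₀)². -/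

import Mathlib

private lemma deriv_bound_1d (γ a b : ℝ) (ψ : ℝ → ℝ)
    (h : ∀ t ∈ Set.Ioo a b, DifferentiableAt ℝ ψ t ∧
        DifferentiableAt ℝ (deriv ψ) t ∧ deriv (deriv ψ) t ≤ γ)
    {x y : ℝ} (hx : x ∈ Set.Ioo a b) (hy : y ∈ Set.Ioo a b) (hxy : x ≤ y) :
    deriv ψ y ≤ deriv ψ x + γ * (y - x) := by
  set g : ℝ → ℝ := fun t => deriv ψ t - γ * t with hg
  have hgd : ∀ t ∈ Set.Ioo a b, HasDerivAt g (deriv (deriv ψ) t - γ) t := by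
    intro t ht
    exact ((h t ht).2.1.hasDerivAt).sub ((hasDerivAt_id t).const_mul γ |>.congr_deriv (by ring))
  have hanti : AntitoneOn g (Set.Ioo a b) := by
    apply antitoneOn_of_deriv_nonpos (convex_Ioo a b)
    · exact fun t ht => ((hgd t ht).differentiableAt).continuousAt.continuousWithinAt
    · intro t ht
      rw [interior_Ioo] at ht
      exact (hgd t ht).differentiableAt.differentiableWithinAt
    · intro t ht
      rw [interior_Ioo] at ht
      rw [(hgd t ht).deriv]
      linarith [(h t ht).2.2]
  have := hanti hx hy hxy
  simp only [hg] at this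
  linarith

private lemma value_bound_1d (γ a b : ℝ) (ψ : ℝ → ℝ)
    (h : ∀ t ∈ Set.Ioo a b, DifferentiableAt ℝ ψ t ∧
        DifferentiableAt ℝ (deriv ψ) t ∧ deriv (deriv ψ) t ≤ γ)
    {x y : ℝ} (hx : x ∈ Set.Ioo a b) (hy : y ∈ Set.Ioo a b) (hxy : x ≤ y) :
    ψ y ≤ ψ x + deriv ψ x * (y - x) + γ / 2 * (y - x) ^ 2 := by
  set F : ℝ → ℝ := fun t => ψ x + deriv ψ x * (t - x) + γ / 2 * (t - x) ^ 2 - ψ t with hF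
  have hsub : Set.Icc x y ⊆ Set.Ioo a b := Set.Icc_subset_Ioo hx.1 hy.2
  have hFd : ∀ t ∈ Set.Ioo a b,
      HasDerivAt F (deriv ψ x + γ * (t - x) - deriv ψ t) t := by
    intro t ht
    have h1 : HasDerivAt (fun t : ℝ => t - x) 1 t := (hasDerivAt_id t).sub_const x
    have h2 : HasDerivAt (fun t : ℝ => deriv ψ x * (t - x)) (deriv ψ x) t := by
      simpa using h1.const_mul (deriv ψ x)
    have h3 : HasDerivAt (fun t : ℝ => γ / 2 * (t - x) ^ 2) (γ * (t - x)) t := by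
      have := (h1.fun_pow 2).const_mul (γ / 2)
      exact this.congr_deriv (by norm_num; ring)
    have := ((h2.const_add (ψ x)).add h3).sub (h t ht).1.hasDerivAt
    exact this
  have hmono : MonotoneOn F (Set.Icc x y) := by
    apply monotoneOn_of_deriv_nonneg (convex_Icc x y)
    · exact fun t ht => (hFd t (hsub ht)).differentiableAt.continuousAt.continuousWithinAt
    · intro t ht
      rw [interior_Icc] at ht
      exact (hFd t (hsub (Set.Ioo_subset_Icc_self ht))).differentiableAt.differentiableWithinAt
    · intro t ht
      rw [interior_Icc] at ht
      have ht' : t ∈ Set.Ioo a b := hsub (Set.Ioo_subset_Icc_self ht)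
      rw [(hFd t ht').deriv]
      have := deriv_bound_1d γ a b ψ h hx ht' ht.1.le
      linarith
  have := hmono (Set.left_mem_Icc.mpr hxy) (Set.right_mem_Icc.mpr hxy) hxy
  simp only [hF] at this
  nlinarith [this]

private lemma stmt_1_aux (γ : ℝ) (α : ℕ → ℝ) (ψ : ℕ → ℝ → ℝ) :
    ∀ m : ℕ, (∀ j ≤ m, α j < α (j + 1)) →
    (∀ j ≤ m, ∃ a b : ℝ, a < α j ∧ α (j + 1) < b ∧
      ∀ t ∈ Set.Ioo a b, DifferentiableAt ℝ (ψ j) t ∧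
        DifferentiableAt ℝ (deriv (ψ j)) t ∧ deriv (deriv (ψ j)) t ≤ γ) →
    (∀ j < m, ψ j (α (j + 1)) = ψ (j + 1) (α (j + 1))) →
    (∀ j < m, deriv (ψ (j + 1)) (α (j + 1)) ≤ deriv (ψ j) (α (j + 1))) →
    ψ m (α (m + 1)) ≤ ψ 0 (α 0) + deriv (ψ 0) (α 0) * (α (m + 1) - α 0) +
      γ / 2 * (α (m + 1) - α 0) ^ 2 ∧
    deriv (ψ m) (α (m + 1)) ≤ deriv (ψ 0) (α 0) + γ * (α (m + 1) - α 0) := by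
  intro m
  induction m with
  | zero =>
    intro hα hdiff _ _
    obtain ⟨a, b, ha, hb, h⟩ := hdiff 0 le_rfl
    have hx : α 0 ∈ Set.Ioo a b := ⟨ha, lt_trans (hα 0 le_rfl) hb⟩
    have hy : α 1 ∈ Set.Ioo a b := ⟨lt_trans ha (hα 0 le_rfl), hb⟩
    exact ⟨value_bound_1d γ a b (ψ 0) h hx hy (hα 0 le_rfl).le,
      deriv_bound_1d γ a b (ψ 0) h hx hy (hα 0 le_rfl).le⟩
  | succ m ih =>
    intro hα hdiff hmatch hjump
    obtain ⟨IHv, IHd⟩ := ih (fun j hj => hα j (hj.trans (Nat.le_succ m)))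
      (fun j hj => hdiff j (hj.trans (Nat.le_succ m)))
      (fun j hj => hmatch j (hj.trans_le (Nat.le_succ m)))
      (fun j hj => hjump j (hj.trans_le (Nat.le_succ m)))
    obtain ⟨a, b, ha, hb, h⟩ := hdiff (m + 1) le_rfl
    have hlt : α (m + 1) < α (m + 2) := hα (m + 1) le_rfl
    have hx : α (m + 1) ∈ Set.Ioo a b := ⟨ha, lt_trans hlt hb⟩
    have hy : α (m + 2) ∈ Set.Ioo a b := ⟨lt_trans ha hlt, hb⟩
    have hv := value_bound_1d γ a b (ψ (m + 1)) h hx hy hlt.le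
    have hd := deriv_bound_1d γ a b (ψ (m + 1)) h hx hy hlt.le
    have hmv := hmatch m (Nat.lt_succ_self m)
    have hmd := hjump m (Nat.lt_succ_self m)
    -- Δ = α (m+1) - α 0, δ = α (m+2) - α (m+1)
    have hΔpos : α 0 < α (m + 1) := by
      have key : ∀ k, k ≤ m + 1 → α 0 ≤ α k := by
        intro k
        induction k with
        | zero => intro _; exact le_rfl
        | succ k ihk =>
          intro hk
          have hk' : k ≤ m := Nat.le_of_succ_le_succ hk
          exact le_trans (ihk (le_trans (Nat.le_succ k) hk))
            (hα k (hk'.trans (Nat.le_succ m))).le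
      exact lt_of_le_of_lt (key m (Nat.le_succ m)) (hα m (Nat.le_succ m))
    constructor
    · have h1 : ψ (m + 1) (α (m + 1)) ≤ ψ 0 (α 0) +
          deriv (ψ 0) (α 0) * (α (m + 1) - α 0) + γ / 2 * (α (m + 1) - α 0) ^ 2 := by
        rw [← hmv]; exact IHv
      have h2 : deriv (ψ (m + 1)) (α (m + 1)) ≤ deriv (ψ 0) (α 0) + γ * (α (m + 1) - α 0) :=
        le_trans hmd IHd
      have h2' : deriv (ψ (m + 1)) (α (m + 1)) * (α (m + 2) - α (m + 1)) ≤
          (deriv (ψ 0) (α 0) + γ * (α (m + 1) - α 0)) * (α (m + 2) - α (m + 1)) :=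
        mul_le_mul_of_nonneg_right h2 (by linarith)
      nlinarith [hv, h1, h2']
    · have h2 : deriv (ψ (m + 1)) (α (m + 1)) ≤ deriv (ψ 0) (α 0) + γ * (α (m + 1) - α 0) :=
        le_trans hmd IHd
      linarith [hd]

theorem stmt_1 (γ : ℝ) (m : ℕ) (α : ℕ → ℝ) (ψ : ℕ → ℝ → ℝ)
    (hα : ∀ j ≤ m, α j < α (j + 1))
    (hdiff : ∀ j ≤ m, ∃ a b : ℝ, a < α j ∧ α (j + 1) < b ∧
      ∀ t ∈ Set.Ioo a b, DifferentiableAt ℝ (ψ j) t ∧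
        DifferentiableAt ℝ (deriv (ψ j)) t ∧ deriv (deriv (ψ j)) t ≤ γ)
    (hmatch : ∀ j < m, ψ j (α (j + 1)) = ψ (j + 1) (α (j + 1)))
    (hjump : ∀ j < m, deriv (ψ (j + 1)) (α (j + 1)) ≤ deriv (ψ j) (α (j + 1))) :
    ψ m (α (m + 1)) ≤ ψ 0 (α 0) + deriv (ψ 0) (α 0) * (α (m + 1) - α 0) +
      γ / 2 * (α (m + 1) - α 0) ^ 2 := by
  exact (stmt_1_aux γ α ψ m hα hdiff hmatch hjump).1
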